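/- Let μ be the sparse measure on 2^ℕ (marginals m_{n_k}({1}) = 2^k/(2^k+1) along the sparse index sequence n_0 = 0, n_{k+1} = n_k + 2^{k·(Σ_{i≤k} i)}, and m_n({1}) = 1/2 otherwise), and set p_k = 2^{Σ_{i≤k} i}. For k ≥ 1 let Z_k = {x ∈ 2^ℕ : the number of indices i with n_k < i < n_{k+1} and x(i) = 1 is at most p_k}. Then μ(Z_k) ≤ 2^{−k} for all sufficiently large k; in particular, Σ_{k≥1} μ(Z_k) < ∞. -/

import Mathlib

open MeasureTheory Filter Set ENNReal

/-- `μ` is the product of the marginal measures `m n` on `Bool`. -/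
def IsProductMeasure (μ : Measure (ℕ → Bool)) (m : ℕ → Measure Bool) : Prop :=
  ∀ (s : Finset ℕ) (a : ℕ → Bool),
    μ {x | ∀ n ∈ s, x n = a n} = ∏ n ∈ s, m n {a n}

/-- The sparse index sequence: `n₀ = 0` and `n_{k+1} = n_k + 2 ^ (k · Σ_{i ≤ k} i)`. -/
def sparseSeq : ℕ → ℕ
  | 0 => 0
  | k + 1 => sparseSeq k + 2 ^ (k * ∑ i ∈ Finset.range (k + 1), i)

/-- `p_k = 2 ^ (Σ_{i ≤ k} i)`. -/
def sparseP (k : ℕ) : ℕ := 2 ^ (∑ i ∈ Finset.range (k + 1), i)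

/-- The marginals of the sparse measure: `m (n_k) {1} = 2^k/(2^k+1)` along the sparse index
sequence, and `m n {1} = 1/2` for `n` not of the form `n_k`. -/
def IsSparseMarginals (m : ℕ → Measure Bool) : Prop :=
  (∀ k : ℕ, m (sparseSeq k) {true} = (2 ^ k : ℝ≥0∞) / (2 ^ k + 1)) ∧
    ∀ n : ℕ, (∀ k : ℕ, n ≠ sparseSeq k) → m n {true} = 1 / 2

/-- The multiplicative jump `m n {0} / m n {1}` of the sparse measure: `r (n_k) = 2⁻ᵏ` along the
sparse index sequence and `r n = 1` otherwise. -/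
def IsSparseJump (r : ℕ → ℝ≥0∞) : Prop :=
  (∀ k : ℕ, r (sparseSeq k) = ((2 : ℝ≥0∞) ^ k)⁻¹) ∧
    ∀ n : ℕ, (∀ k : ℕ, n ≠ sparseSeq k) → r n = 1

/-- The number of indices `i` with `n_k < i < n_{k+1}` and `x i = 1`. -/
def onesBetween (x : ℕ → Bool) (k : ℕ) : ℕ :=
  ((Finset.Ioo (sparseSeq k) (sparseSeq (k + 1))).filter fun i => x i = true).card

/-- The event `Z_k`: the number of `1`s of `x` strictly between `n_k` and `n_{k+1}` is at most
`p_k`. -/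
def sparseEvent (k : ℕ) : Set (ℕ → Bool) := {x | onesBetween x k ≤ sparseP k}

lemma sparseSeq_strictMono : StrictMono sparseSeq :=
  strictMono_nat_of_lt_succ fun k => by
    show sparseSeq k < sparseSeq k + 2 ^ _
    exact Nat.lt_add_of_pos_right (Nat.pow_pos (by norm_num))

lemma not_sparse {k n : ℕ} (h : n ∈ Finset.Ioo (sparseSeq k) (sparseSeq (k+1))) :
    ∀ j, n ≠ sparseSeq j := by
  intro j hj
  simp only [Finset.mem_Ioo] at h
  rcases le_or_gt j k with hle | hlt
  · exact absurd (hj ▸ h.1) (not_lt.2 (sparseSeq_strictMono.monotone hle))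
  · exact absurd (hj ▸ h.2) (not_lt.2 (sparseSeq_strictMono.monotone hlt))

lemma half_marginal {m : ℕ → Measure Bool} (hprob : ∀ n, IsProbabilityMeasure (m n))
    (hm : IsSparseMarginals m) {n : ℕ} (h : ∀ j, n ≠ sparseSeq j) (b : Bool) :
    m n {b} = 2⁻¹ := by
  have ht : m n {true} = 2⁻¹ := by rw [hm.2 n h, one_div]
  cases b
  · have : ({false} : Set Bool) = {true}ᶜ := by
      ext b; cases b <;> simp
    rw [this, measure_compl (by measurability) (measure_ne_top _ _), ht,
      (hprob n).measure_univ]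
    simp [ENNReal.one_sub_inv_two]
  · exact ht

lemma aux_lin (t : ℕ) (ht : 4 ≤ t) : 2*t + 4 ≤ 2^t := by
  induction t, ht using Nat.le_induction with
  | base => norm_num
  | succ u hu ih => rw [pow_succ]; omega

lemma aux_quad (s : ℕ) (hs : 6 ≤ s) : s^2 + 3*s ≤ 2^s := by
  induction s, hs using Nat.le_induction with
  | base => norm_num
  | succ u hu ih =>
    have h4 := aux_lin u (by omega)
    calc (u+1)^2 + 3*(u+1) = u^2 + 3*u + (2*u+4) := by ring
      _ ≤ 2^u + 2^u := by linarith
      _ = 2^(u+1) := by rw [pow_succ]; ring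

/-- The key natural-number inequality. -/
lemma nat_key (k s : ℕ) (hk : 3 ≤ k) (hs2 : s * 2 = (k+1) * k) :
    (s + 1 + k * s * 2^s) + k + 1 + 1 ≤ 2^(k*s) := by
  have hks : k ≤ s := by nlinarith
  have hs6 : 6 ≤ s := by nlinarith
  set p := 2^s with hp
  have hp1 : s^2 + 3*s ≤ p := aux_quad s hs6
  have h1 : (s + 1 + k * s * p) + k + 1 + 1 ≤ p * (s + k*s + k + 3) := by nlinarith
  have h2 : s + k*s + k + 3 ≤ s^2 + 3*s := by nlinarith
  have h3 : p * (s + k*s + k + 3) ≤ p * p := Nat.mul_le_mul_left p (h2.trans hp1)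
  have h4 : p * p = p^2 := (sq p).symm
  have h5 : p^2 ≤ p^k := Nat.pow_le_pow_right (Nat.one_le_two_pow) (by omega)
  have h6 : p^k = 2^(k*s) := by rw [hp, ← pow_mul, mul_comm s k]
  omega

/-- Main estimate: `μ (sparseEvent k) ≤ 2⁻ᵏ` for `k ≥ 3`. -/
lemma sparse_event_bound
    (m : ℕ → Measure Bool) (hprob : ∀ n, IsProbabilityMeasure (m n))
    (hm : IsSparseMarginals m)
    (μ : Measure (ℕ → Bool)) (hμ : IsProductMeasure μ m)
    (k : ℕ) (hk : 3 ≤ k) :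
    μ (sparseEvent k) ≤ ((2 : ℝ≥0∞) ^ k)⁻¹ := by
  classical
  set s := ∑ i ∈ Finset.range (k + 1), i with hs
  set S := Finset.Ioo (sparseSeq k) (sparseSeq (k+1)) with hS
  set p := sparseP k with hpdef
  have hp : p = 2^s := rfl
  -- cardinality of the index window
  have hcard : S.card = 2^(k*s) - 1 := by
    rw [hS, Nat.card_Ioo]
    show sparseSeq k + 2 ^ (k * s) - sparseSeq k - 1 = _
    omega
  set N := S.card with hN
  -- basic numeric facts
  have hkey := nat_key k s hk (by rw [hs]; exact Finset.sum_range_id_mul_two (k+1))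
  rw [← hp] at hkey
  have hN1 : 1 ≤ N := by rw [hcard]; omega
  -- the covering family
  set P : Finset (Finset ℕ) := S.powerset.filter (fun A => A.card ≤ p) with hP
  have hcover : sparseEvent k ⊆
      ⋃ A ∈ P, {x : ℕ → Bool | ∀ n ∈ S, x n = decide (n ∈ A)} := by
    intro x hx
    have hAP : (S.filter fun n => x n = true) ∈ P := by
      simp only [hP, Finset.mem_filter, Finset.mem_powerset]
      exact ⟨Finset.filter_subset _ _, hx⟩
    refine Set.mem_biUnion hAP ?_
    intro n hn
    by_cases h : x n = true
    · simp [Finset.mem_filter, hn, h]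
    · simp only [Bool.not_eq_true] at h
      simp [Finset.mem_filter, hn, h]
  -- measure of each cylinder
  have hcyl : ∀ A ∈ P,
      μ {x : ℕ → Bool | ∀ n ∈ S, x n = decide (n ∈ A)} = 2⁻¹ ^ N := by
    intro A _
    rw [hμ S (fun n => decide (n ∈ A))]
    rw [Finset.prod_congr rfl
      (fun n hn => half_marginal hprob hm (not_sparse (hS ▸ hn)) _),
      Finset.prod_const]
  -- counting
  have hcount : P.card ≤ 2^(s + 1 + k*s*p) := by
    have hsub : P ⊆ (Finset.range (p+1)).biUnion (fun j => S.powersetCard j) := by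
      intro A hA
      simp only [hP, Finset.mem_filter, Finset.mem_powerset] at hA
      exact Finset.mem_biUnion.2 ⟨A.card, Finset.mem_range.2 (Nat.lt_succ_of_le hA.2),
        (Finset.mem_powersetCard).2 ⟨hA.1, rfl⟩⟩
    calc P.card ≤ ((Finset.range (p+1)).biUnion (fun j => S.powersetCard j)).card :=
          Finset.card_le_card hsub
      _ ≤ ∑ j ∈ Finset.range (p+1), (S.powersetCard j).card := Finset.card_biUnion_le
      _ = ∑ j ∈ Finset.range (p+1), N.choose j := by
          simp [Finset.card_powersetCard, hN]
      _ ≤ ∑ _j ∈ Finset.range (p+1), N^p := by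
          refine Finset.sum_le_sum fun j hj => ?_
          exact (Nat.choose_le_pow N j).trans
            (Nat.pow_le_pow_right hN1 (Nat.lt_succ_iff.1 (Finset.mem_range.1 hj)))
      _ = (p+1) * N^p := by rw [Finset.sum_const, Finset.card_range, smul_eq_mul]
      _ ≤ 2^(s+1) * (2^(k*s))^p := by
          have hNle : N ≤ 2^(k*s) := by rw [hcard]; exact Nat.sub_le _ _
          have hp1 : p + 1 ≤ 2^(s+1) := by
            have h1 : 1 ≤ 2^s := Nat.one_le_two_pow
            rw [pow_succ, hp]; linarith
          exact Nat.mul_le_mul hp1 (Nat.pow_le_pow_left hNle p)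
      _ = 2^(s + 1 + k*s*p) := by rw [← pow_mul, ← pow_add]
  -- put it together
  set M := s + 1 + k*s*p with hM
  have hMN : M + k + 1 ≤ 2^(k*s) := by rw [hM]; omega
  calc μ (sparseEvent k)
      ≤ μ (⋃ A ∈ P, {x : ℕ → Bool | ∀ n ∈ S, x n = decide (n ∈ A)}) := measure_mono hcover
    _ ≤ ∑ A ∈ P, μ {x : ℕ → Bool | ∀ n ∈ S, x n = decide (n ∈ A)} :=
        measure_biUnion_finset_le _ _
    _ = P.card * 2⁻¹ ^ N := by
        rw [Finset.sum_congr rfl hcyl, Finset.sum_const, nsmul_eq_mul]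
    _ ≤ (2:ℝ≥0∞)^M * 2⁻¹ ^ N := by
        refine mul_le_mul_left ?_ _
        calc (P.card : ℝ≥0∞) ≤ ((2^M : ℕ) : ℝ≥0∞) := Nat.cast_le.2 hcount
          _ = (2:ℝ≥0∞)^M := by push_cast; rfl
    _ ≤ ((2:ℝ≥0∞) ^ k)⁻¹ := by
        rw [← ENNReal.inv_pow]
        have hk' : k ≤ N - M := by omega
        have hsplit : (2:ℝ≥0∞)^N = 2^M * 2^(N-M) := by
          rw [← pow_add]; congr 1; omega
        rw [hsplit, ENNReal.mul_inv (by left; exact pow_ne_zero _ two_ne_zero)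
            (by left; exact ENNReal.pow_ne_top ENNReal.ofNat_ne_top),
          ← mul_assoc, ENNReal.mul_inv_cancel (pow_ne_zero _ two_ne_zero)
            (ENNReal.pow_ne_top ENNReal.ofNat_ne_top), one_mul]
        exact ENNReal.inv_le_inv.2 (pow_le_pow_right₀ one_le_two hk')

/-- for the sparse product measure, `μ (Z_k) ≤ 2⁻ᵏ` for all sufficiently large
`k`; in particular `Σ_{k ≥ 1} μ (Z_k) < ∞`. -/
theorem sparse_event_measure_summable
    (m : ℕ → Measure Bool) (hprob : ∀ n, IsProbabilityMeasure (m n))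
    (hm : IsSparseMarginals m)
    (μ : Measure (ℕ → Bool)) (hμ : IsProductMeasure μ m) :
    (∀ᶠ k in atTop, μ (sparseEvent k) ≤ ((2 : ℝ≥0∞) ^ k)⁻¹) ∧
      (∑' k : ℕ, μ (sparseEvent (k + 1))) ≠ ⊤ := by
  have hev : ∀ᶠ k in atTop, μ (sparseEvent k) ≤ ((2 : ℝ≥0∞) ^ k)⁻¹ := by
    filter_upwards [eventually_ge_atTop 3] with k hk
    exact sparse_event_bound m hprob hm μ hμ k hk
  refine ⟨hev, ?_⟩
  have huniv : μ Set.univ = 1 := by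
    have := hμ ∅ (fun _ => true)
    simpa using this
  have hone : ∀ s, μ s ≤ 1 := fun s => huniv ▸ measure_mono (Set.subset_univ s)
  obtain ⟨K, hK⟩ := eventually_atTop.1 hev
  have hb : ∀ k : ℕ, μ (sparseEvent (k+1)) ≤
      (2⁻¹ : ℝ≥0∞)^k + (if k + 1 < K then 1 else 0) := by
    intro k
    rcases le_or_gt K (k+1) with h | h
    · refine le_trans (hK (k+1) h) (le_trans ?_ le_self_add)
      rw [← ENNReal.inv_pow]
      exact ENNReal.inv_le_inv.2 (pow_le_pow_right₀ one_le_two (Nat.le_succ k))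
    · simp only [if_pos h]
      exact le_trans (hone _) le_add_self
  refine ne_top_of_le_ne_top ?_ (ENNReal.tsum_le_tsum hb)
  rw [ENNReal.tsum_add]
  refine ENNReal.add_ne_top.2 ⟨?_, ?_⟩
  · rw [ENNReal.tsum_geometric]
    simp [ENNReal.one_sub_inv_two]
  · rw [tsum_eq_sum (s := Finset.range K) (fun b hb => by
      simp only [Finset.mem_range, not_lt] at hb
      simp [Nat.lt_irrefl, show ¬ (b + 1 < K) by omega])]
    exact (ENNReal.sum_lt_top.2 fun a _ => by split <;> simp).ne
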